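/- Let X_1, ..., X_n be i.i.d. samples from a distribution on [0,1] with density π bounded below by π̲ > 0. Let p ∈ (0,1) and γ > 0 with γ < min(F_π^{-1}(p), 1 - F_π^{-1}(p)). Define N̄ = Σ_{i=1}^n 1{X_i > F_π^{-1}(p) + γ}. Then for every integer k with k + 1 ≤ (1/2)·n·γ·π̲, P(X_(⌊np⌋ + k) > F_π^{-1}(p) + γ) ≤ exp(-γ²π̲²n/(8(1-p))). -/

import Mathlib

open MeasureTheory ProbabilityTheory

lemma aux_log_ge {x : ℝ} (hx : 0 ≤ x) : 2*x/(2+x) ≤ Real.log (1+x) := by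
  set f : ℝ → ℝ := fun y => Real.log (1+y) - 2*y/(2+y) with hf
  have hderiv : ∀ y ∈ Set.Ici (0:ℝ), HasDerivAt f (1/(1+y) - 4/(2+y)^2) y := by
    intro y hy
    have hy0 : (0:ℝ) ≤ y := hy
    have h1 : (0:ℝ) < 1 + y := by linarith
    have h2 : (0:ℝ) < 2 + y := by linarith
    have d1 : HasDerivAt (fun z : ℝ => Real.log (1+z)) (1/(1+y)) y := by
      have h : HasDerivAt (fun z : ℝ => 1+z) 1 y := by
        simpa using (hasDerivAt_id y).const_add (1:ℝ)
      simpa [one_div, Function.comp_def] using (Real.hasDerivAt_log h1.ne').comp y h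
    have d2 : HasDerivAt (fun z : ℝ => 2*z/(2+z)) (4/(2+y)^2) y := by
      have hd : HasDerivAt (fun z : ℝ => 2*z) 2 y := by
        simpa using (hasDerivAt_id y).const_mul (2:ℝ)
      have he : HasDerivAt (fun z : ℝ => 2+z) 1 y := by
        simpa using (hasDerivAt_id y).const_add (2:ℝ)
      have := hd.div he h2.ne'
      exact this.congr_deriv (by ring)
    exact d1.sub d2
  have hmono : MonotoneOn f (Set.Ici 0) := by
    apply monotoneOn_of_deriv_nonneg (convex_Ici 0)
    · intro y hy
      exact (hderiv y hy).continuousAt.continuousWithinAt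
    · intro y hy
      exact ((hderiv y (interior_subset hy)).differentiableAt).differentiableWithinAt
    · intro y hy
      rw [interior_Ici] at hy
      have h0 : (0:ℝ) < y := hy
      rw [(hderiv y h0.le).deriv]
      have h1 : (0:ℝ) < 1 + y := by linarith
      have h2 : (0:ℝ) < (2+y)^2 := by positivity
      rw [sub_nonneg, div_le_div_iff₀ h2 h1]
      nlinarith
  have h0 : f 0 = 0 := by simp [hf]
  have := hmono Set.self_mem_Ici (Set.mem_Ici.mpr hx) hx
  rw [h0] at this
  simpa [hf, sub_nonneg] using this

lemma aux_exponent {u g nR aR : ℝ} (hu : 0 < u) (hg : 0 < g) (hgu : g ≤ u) (hn : 0 ≤ nR)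
    (ha : nR*(u-g) + nR*g/2 ≤ aR) :
    ∃ t : ℝ, 0 ≤ t ∧ nR*(u-g)*(Real.exp t - 1) - t*aR ≤ -(nR*g^2/(8*u)) := by
  rcases eq_or_lt_of_le hgu with heq | hlt
  · refine ⟨g/(4*u), by positivity, ?_⟩
    have hug : u - g = 0 := by rw [heq]; ring
    have haR : nR*g/2 ≤ aR := by
      have := ha; rw [hug] at this; linarith
    have ht0 : (0:ℝ) ≤ g/(4*u) := by positivity
    have h1 : g/(4*u) * (nR*g/2) ≤ g/(4*u)*aR := mul_le_mul_of_nonneg_left haR ht0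
    have heval : g/(4*u)*(nR*g/2) = nR*g^2/(8*u) := by field_simp; ring
    rw [hug]
    nlinarith
  · set μ := u - g with hμ
    have hμ0 : 0 < μ := sub_pos.mpr hlt
    set δ := g/(2*μ) with hδ
    have hδ0 : 0 < δ := by positivity
    refine ⟨Real.log (1+δ), Real.log_nonneg (by linarith), ?_⟩
    rw [Real.exp_log (by linarith)]
    have hlog := aux_log_ge hδ0.le
    have haR0 : 0 ≤ nR*μ + nR*g/2 :=
      add_nonneg (mul_nonneg hn hμ0.le) (div_nonneg (mul_nonneg hn hg.le) (by norm_num))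
    have hfrac0 : (0:ℝ) ≤ 2*δ/(2+δ) := by positivity
    have h1 : (2*δ/(2+δ)) * (nR*μ + nR*g/2) ≤ Real.log (1+δ) * aR :=
      mul_le_mul hlog ha haR0 (le_trans hfrac0 hlog)
    have hg2 : g = 2*μ*δ := by rw [hδ]; field_simp
    have halg : nR*μ*((1+δ)-1) - (2*δ/(2+δ))*(nR*μ + nR*g/2) ≤ -(nR*g^2/(8*u)) := by
      have h2δ : (0:ℝ) < 2+δ := by linarith
      have hueq : u = μ + g := by rw [hμ]; ring
      rw [hueq, hg2]
      have h8 : (0:ℝ) < 8*(μ + 2*μ*δ) := by nlinarith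
      rw [div_le_iff₀ h2δ] at hlog
      field_simp
      nlinarith [mul_nonneg hn hμ0.le, sq_nonneg δ, mul_nonneg (mul_nonneg hn hμ0.le) (sq_nonneg δ), mul_nonneg (mul_nonneg (mul_nonneg hn hμ0.le) hδ0.le) (sq_nonneg δ)]
    linarith


set_option maxHeartbeats 1600000 in
/-- One-sided concentration of order statistics. -/
theorem stmt_11 {Ω : Type*} [MeasurableSpace Ω] (P : Measure Ω) [IsProbabilityMeasure P]
    (n : ℕ) (hn : 1 ≤ n)
    (pdf : ℝ → ℝ) (piLow : ℝ) (hlow : 0 < piLow)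
    (hbound : ∀ᵐ x ∂(volume.restrict (Set.Icc (0:ℝ) 1)), piLow ≤ pdf x)
    (X : Fin n → Ω → ℝ) (hX : ∀ i, Measurable (X i))
    (hindep : iIndepFun X P)
    (hlaw : ∀ i, Measure.map (X i) P =
      (volume.restrict (Set.Icc (0:ℝ) 1)).withDensity (fun x => ENNReal.ofReal (pdf x)))
    (Y : ℕ → Ω → ℝ)
    (hsort : ∀ ω, ∀ i j, 1 ≤ i → i ≤ j → j ≤ n → Y i ω ≤ Y j ω)
    (hperm : ∀ ω, ∃ σ : Equiv.Perm (Fin n), ∀ i : Fin n, Y (i.1 + 1) ω = X (σ i) ω)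
    (F Finv : ℝ → ℝ)
    (hF : ∀ t, F t = ∫ x in (0:ℝ)..t, pdf x)
    (hFinv : ∀ q, Finv q = sInf {t : ℝ | q ≤ F t})
    (p : ℝ) (hp : p ∈ Set.Ioo (0:ℝ) 1)
    (γ : ℝ) (hγ0 : 0 < γ) (hγ1 : γ < min (Finv p) (1 - Finv p))
    (k : ℤ) (hk : (k : ℝ) + 1 ≤ (1/2) * n * γ * piLow)
    (hidx1 : 1 ≤ ⌊(n:ℝ) * p⌋ + k) (hidx2 : ⌊(n:ℝ) * p⌋ + k ≤ (n:ℤ)) :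
    P {ω | Y (⌊(n:ℝ) * p⌋ + k).toNat ω > Finv p + γ} ≤
      ENNReal.ofReal (Real.exp (-(γ ^ 2 * piLow ^ 2 * n / (8 * (1 - p))))) := by
  have hγa : γ < Finv p := lt_of_lt_of_le hγ1 (min_le_left _ _)
  have hγb : γ < 1 - Finv p := lt_of_lt_of_le hγ1 (min_le_right _ _)
  classical
  obtain ⟨hp0, hp1⟩ := hp
  set q : ℝ := Finv p + γ with hqdef
  have hq1 : q < 1 := by simp only [hqdef]; linarith
  have hFp0 : 0 < Finv p := lt_trans hγ0 hγa
  have hq0 : 0 < q := by simp only [hqdef]; linarith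
  set ν := (volume.restrict (Set.Icc (0:ℝ) 1)).withDensity (fun x => ENNReal.ofReal (pdf x))
    with hνdef
  have hprob : IsProbabilityMeasure ν := by
    rw [← hlaw ⟨0, hn⟩]
    exact Measure.isProbabilityMeasure_map (hX ⟨0, hn⟩).aemeasurable
  -- the restricted lintegral identity
  have hνIoc : ∀ s t : ℝ, 0 ≤ s → t ≤ 1 →
      ν (Set.Ioc s t) = ∫⁻ x in Set.Ioc s t, ENNReal.ofReal (pdf x) ∂volume := by
    intro s t hs0 ht1
    have hsub : Set.Ioc s t ⊆ Set.Icc (0:ℝ) 1 := fun x hx =>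
      ⟨le_trans hs0 hx.1.le, le_trans hx.2 ht1⟩
    rw [hνdef, withDensity_apply _ measurableSet_Ioc,
      Measure.restrict_restrict measurableSet_Ioc, Set.inter_eq_left.mpr hsub]
  -- step lemma (a)
  have hstep : ∀ s t : ℝ, 0 ≤ s → s ≤ t → t ≤ 1 →
      ν (Set.Ioc 0 s) + ENNReal.ofReal (piLow*(t-s)) ≤ ν (Set.Ioc 0 t) := by
    intro s t hs0 hst ht1
    have hsub : Set.Ioc s t ⊆ Set.Icc (0:ℝ) 1 := fun x hx =>
      ⟨le_trans hs0 hx.1.le, le_trans hx.2 ht1⟩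
    have hae : ∀ᵐ x ∂(volume.restrict (Set.Ioc s t)), piLow ≤ pdf x :=
      ae_restrict_of_ae_restrict_of_subset hsub hbound
    have hlow2 : ENNReal.ofReal (piLow*(t-s)) ≤ ν (Set.Ioc s t) := by
      rw [hνIoc s t hs0 ht1]
      calc ENNReal.ofReal (piLow*(t-s))
          = ∫⁻ _ in Set.Ioc s t, ENNReal.ofReal piLow ∂volume := by
            rw [setLIntegral_const, Real.volume_Ioc, ← ENNReal.ofReal_mul hlow.le]
        _ ≤ _ := lintegral_mono_ae (hae.mono fun x hx => ENNReal.ofReal_le_ofReal hx)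
    have hunion : ν (Set.Ioc 0 s) + ν (Set.Ioc s t) = ν (Set.Ioc 0 t) := by
      rw [← measure_union (Set.Ioc_disjoint_Ioc_of_le le_rfl) measurableSet_Ioc,
        Set.Ioc_union_Ioc_eq_Ioc hs0 hst]
    calc ν (Set.Ioc 0 s) + ENNReal.ofReal (piLow*(t-s))
        ≤ ν (Set.Ioc 0 s) + ν (Set.Ioc s t) := by gcongr
      _ = ν (Set.Ioc 0 t) := hunion
  -- lemma (b)
  have hcdf : ∀ t : ℝ, 0 < t → t ≤ 1 → p ≤ F t → ENNReal.ofReal p ≤ ν (Set.Ioc 0 t) := by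
    intro t ht0 ht1 hpt
    have hsub : Set.Ioc 0 t ⊆ Set.Icc (0:ℝ) 1 := fun x hx => ⟨hx.1.le, le_trans hx.2 ht1⟩
    have hae : ∀ᵐ x ∂(volume.restrict (Set.Ioc 0 t)), piLow ≤ pdf x :=
      ae_restrict_of_ae_restrict_of_subset hsub hbound
    have hnn : 0 ≤ᵐ[volume.restrict (Set.Ioc 0 t)] pdf :=
      hae.mono fun x hx => le_trans hlow.le hx
    by_cases hm : AEMeasurable pdf (volume.restrict (Set.Ioc 0 t))
    · have hFt : F t = (ν (Set.Ioc 0 t)).toReal := by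
        rw [hF, intervalIntegral.integral_of_le ht0.le,
          integral_eq_lintegral_of_nonneg_ae hnn hm.aestronglyMeasurable,
          hνIoc 0 t le_rfl ht1]
      have hple : p ≤ (ν (Set.Ioc 0 t)).toReal := hFt ▸ hpt
      calc ENNReal.ofReal p ≤ ENNReal.ofReal ((ν (Set.Ioc 0 t)).toReal) :=
            ENNReal.ofReal_le_ofReal hple
        _ = ν (Set.Ioc 0 t) := ENNReal.ofReal_toReal (measure_ne_top ν _)
    · exfalso
      have hni : ¬ IntervalIntegrable pdf volume 0 t := by
        intro hint
        rw [intervalIntegrable_iff, Set.uIoc_of_le ht0.le] at hint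
        exact hm hint.aestronglyMeasurable.aemeasurable
      have : F t = 0 := by rw [hF, intervalIntegral.integral_undef hni]
      rw [this] at hpt
      linarith
  -- lemma (c)
  have hqS : ENNReal.ofReal (p + piLow*γ) ≤ ν (Set.Ioc 0 q) := by
    have hne : {t : ℝ | p ≤ F t}.Nonempty := by
      by_contra h
      rw [Set.not_nonempty_iff_eq_empty] at h
      have := hFinv p
      rw [h, Real.sInf_empty] at this
      linarith [hFp0, this]
    have hbdd : BddBelow {t : ℝ | p ≤ F t} := by
      by_contra h
      have := Real.sInf_of_not_bddBelow h
      rw [← hFinv p] at this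
      linarith [hFp0]
    have hkey : ∀ ε : ℝ, 0 < ε → ε < γ → p + piLow*(γ - ε) ≤ (ν (Set.Ioc 0 q)).toReal := by
      intro ε hε0 hεγ
      have hlt : sInf {t : ℝ | p ≤ F t} < Finv p + ε := by rw [← hFinv p]; linarith
      obtain ⟨t, htS, htlt⟩ := (csInf_lt_iff hbdd hne).mp hlt
      have htq : Finv p ≤ t := by
        have := csInf_le hbdd htS
        rw [← hFinv p] at this
        exact this
      have ht0 : 0 < t := lt_of_lt_of_le hFp0 htq
      have ht1 : t ≤ 1 := by linarith
      have h1 := hcdf t ht0 ht1 htS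
      have h2 := hstep t q ht0.le (by simp only [hqdef]; linarith) hq1.le
      have h3 : ENNReal.ofReal (p + piLow*(q - t)) ≤ ν (Set.Ioc 0 q) := by
        rw [ENNReal.ofReal_add hp0.le (by nlinarith [hlow.le] : 0 ≤ piLow*(q-t))]
        calc ENNReal.ofReal p + ENNReal.ofReal (piLow*(q-t))
            ≤ ν (Set.Ioc 0 t) + ENNReal.ofReal (piLow*(q-t)) := by gcongr
          _ ≤ ν (Set.Ioc 0 q) := h2
      have h4 : ENNReal.ofReal (p + piLow*(γ - ε)) ≤ ν (Set.Ioc 0 q) := by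
        refine le_trans (ENNReal.ofReal_le_ofReal ?_) h3
        nlinarith [hlow.le]
      exact (ENNReal.ofReal_le_iff_le_toReal (measure_ne_top ν _)).mp h4
    set c := (ν (Set.Ioc 0 q)).toReal with hc
    have hfin : p + piLow*γ ≤ c := by
      by_contra h
      push_neg at h
      set ε := min (γ/2) ((p + piLow*γ - c)/(2*piLow)) with hε
      have hε0 : 0 < ε := by
        apply lt_min (by linarith)
        apply div_pos (by linarith) (by linarith)
      have hεγ : ε < γ := lt_of_le_of_lt (min_le_left _ _) (by linarith)
      have hεb : ε ≤ (p + piLow*γ - c)/(2*piLow) := min_le_right _ _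
      have := hkey ε hε0 hεγ
      have hb2 : piLow * ε ≤ (p + piLow*γ - c)/2 := by
        rw [le_div_iff₀ (by linarith : (0:ℝ) < 2*piLow)] at hεb
        nlinarith
      nlinarith
    calc ENNReal.ofReal (p + piLow*γ) ≤ ENNReal.ofReal c := ENNReal.ofReal_le_ofReal hfin
      _ = ν (Set.Ioc 0 q) := ENNReal.ofReal_toReal (measure_ne_top ν _)
  -- tail bound
  have hIoi : ν (Set.Ioi q) ≤ ENNReal.ofReal (1 - p - piLow*γ) := by
    have hsum : ν (Set.Ioc 0 q) + ν (Set.Ioi q) ≤ 1 := by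
      rw [← measure_union (Set.Ioc_disjoint_Ioi le_rfl) measurableSet_Ioi,
        Set.Ioc_union_Ioi_eq_Ioi hq0.le]
      exact prob_le_one
    have h5 : ENNReal.ofReal (p + piLow*γ) + ν (Set.Ioi q) ≤ 1 := le_trans (by gcongr) hsum
    have hr : (ν (Set.Ioi q)).toReal ≤ 1 - p - piLow*γ := by
      have h6 : ENNReal.ofReal (p + piLow*γ) + ENNReal.ofReal ((ν (Set.Ioi q)).toReal) ≤
          ENNReal.ofReal 1 := by
        rw [ENNReal.ofReal_toReal (measure_ne_top ν _), ENNReal.ofReal_one]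
        exact h5
      rw [← ENNReal.ofReal_add (by nlinarith [hlow.le]) ENNReal.toReal_nonneg] at h6
      have := (ENNReal.ofReal_le_ofReal_iff (by norm_num)).mp h6
      linarith
    calc ν (Set.Ioi q) = ENNReal.ofReal ((ν (Set.Ioi q)).toReal) :=
          (ENNReal.ofReal_toReal (measure_ne_top ν _)).symm
      _ ≤ ENNReal.ofReal (1 - p - piLow*γ) := ENNReal.ofReal_le_ofReal hr
  -- now the probabilistic part
  have hPA : ∀ i, P {ω | q < X i ω} ≤ ENNReal.ofReal (1 - p - piLow*γ) := by
    intro i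
    have hPAi : P {ω | q < X i ω} = ν (Set.Ioi q) := by
      rw [← hlaw i, Measure.map_apply (hX i) measurableSet_Ioi]
      rfl
    rw [hPAi]
    exact hIoi
  set μb : ℝ := 1 - p - piLow*γ with hμbdef
  have hμb0 : 0 ≤ μb := by
    have h1 : ENNReal.ofReal (p + piLow*γ) ≤ 1 := le_trans hqS prob_le_one
    have h2 : p + piLow*γ ≤ 1 := by
      by_contra hcon
      push_neg at hcon
      rw [ENNReal.ofReal_le_one] at h1
      linarith
    rw [hμbdef]
    linarith
  set m : ℕ := (⌊(n:ℝ) * p⌋ + k).toNat with hmdef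
  have hmz : (m:ℤ) = ⌊(n:ℝ) * p⌋ + k := Int.toNat_of_nonneg (le_trans zero_le_one hidx1)
  have hm1 : 1 ≤ m := by omega
  have hmn : m ≤ n := by omega
  have hmR : (m:ℝ) = ((⌊(n:ℝ) * p⌋ : ℤ) : ℝ) + (k:ℝ) := by exact_mod_cast hmz
  have hfloor : ((⌊(n:ℝ) * p⌋ : ℤ) : ℝ) ≤ (n:ℝ) * p := Int.floor_le _
  obtain ⟨t, ht0, hexp⟩ := aux_exponent (u := 1 - p) (g := piLow * γ) (nR := (n:ℝ))
    (aR := (n:ℝ) - m + 1) (by linarith) (by positivity) (by rw [hμbdef] at hμb0; linarith)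
    (Nat.cast_nonneg n) (by rw [hμbdef] at hμb0; nlinarith [hk, hfloor, hmR])
  clear hqS hIoi hstep hcdf hνIoc hprob hbound hlaw hνdef hF hFinv hγ1 hγa hγb hk
  clear hidx1 hidx2 hfloor hmR hmz hq1 hq0 hFp0
  clear_value ν q μb m
  clear hqdef hmdef
  clear ν pdf F Finv k
  set aR : ℝ := (n:ℝ) - m + 1 with haR
  set Zf : Fin n → Ω → ℝ := fun i ω => if q < X i ω then 1 else 0 with hZf
  set Ssum : Ω → ℝ := ∑ i, Zf i with hSsum
  have hSapp : ∀ ω, Ssum ω = ∑ i, Zf i ω := by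
    intro ω; rw [hSsum]; simp [Finset.sum_apply]
  -- event inclusion
  have hincl : {ω | Y m ω > q} ⊆ {ω | aR ≤ Ssum ω} := by
    intro ω hω
    obtain ⟨σ, hσ⟩ := hperm ω
    have hω' : q < Y m ω := hω
    have hnpos : 0 < n := hn
    have hcard : (Finset.Ico (m-1) n).card ≤
        (Finset.univ.filter (fun j : Fin n => q < X j ω)).card := by
      apply Finset.card_le_card_of_injOn (fun j => σ ⟨j % n, Nat.mod_lt j hnpos⟩)
      · intro j hj
        rw [Finset.mem_coe, Finset.mem_Ico] at hj
        have hjn : j < n := hj.2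
        have hmod : j % n = j := Nat.mod_eq_of_lt hjn
        have hfeq : (⟨j % n, Nat.mod_lt j hnpos⟩ : Fin n) = ⟨j, hjn⟩ := Fin.ext hmod
        have hYX := hσ ⟨j, hjn⟩
        simp only at hYX
        have hmj : m ≤ j + 1 := by omega
        have := hsort ω m (j+1) hm1 hmj (by omega)
        rw [Finset.mem_coe, Finset.mem_filter]
        refine ⟨Finset.mem_univ _, ?_⟩
        beta_reduce
        rw [hfeq, ← hYX]
        linarith
      · intro j hj j' hj' hjj
        simp only [Finset.coe_Ico, Set.mem_Ico] at hj hj'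
        have h1 : (⟨j % n, Nat.mod_lt j hnpos⟩ : Fin n) = ⟨j' % n, Nat.mod_lt j' hnpos⟩ :=
          σ.injective hjj
        have := Fin.mk.injEq (j % n) (Nat.mod_lt j hnpos) (j' % n) (Nat.mod_lt j' hnpos) ▸ h1
        rw [Fin.mk.injEq, Nat.mod_eq_of_lt hj.2, Nat.mod_eq_of_lt hj'.2] at h1
        exact h1
    have hsum : Ssum ω = ((Finset.univ.filter (fun j : Fin n => q < X j ω)).card : ℝ) := by
      rw [hSapp ω]
      rw [hZf]
      simp [Finset.sum_boole]
    have hIco : (Finset.Ico (m-1) n).card = n - (m-1) := Nat.card_Ico _ _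
    have hcast : ((n - (m-1) : ℕ) : ℝ) = (n:ℝ) - m + 1 := by
      have h1 : m - 1 ≤ n := by omega
      rw [Nat.cast_sub h1, Nat.cast_sub hm1]
      push_cast
      ring
    have : aR ≤ ((Finset.univ.filter (fun j : Fin n => q < X j ω)).card : ℝ) := by
      rw [haR, ← hcast, ← hIco]
      exact_mod_cast hcard
    rw [Set.mem_setOf_eq, hsum]
    exact this
  -- measurability and independence
  have hAmeas : ∀ i, MeasurableSet {ω | q < X i ω} := fun i => (hX i) measurableSet_Ioi
  have hZmeas : ∀ i, Measurable (Zf i) := by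
    intro i
    exact Measurable.ite ((hX i) measurableSet_Ioi) measurable_const measurable_const
  have hZindep : iIndepFun Zf P := by
    have := hindep.comp (fun _ (x : ℝ) => if q < x then (1:ℝ) else 0)
      (fun _ => Measurable.ite measurableSet_Ioi measurable_const measurable_const)
    exact this
  have hrw : ∀ i, (fun ω => Real.exp (t * Zf i ω)) =
      fun ω => Set.indicator {ω | q < X i ω} (fun _ => Real.exp t - 1) ω + 1 := by
    intro i
    funext ω
    by_cases h : q < X i ω
    · have h' : ω ∈ {ω | q < X i ω} := h
      simp only [hZf, if_pos h, mul_one, Set.indicator_of_mem h']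
      ring
    · have h' : ω ∉ {ω | q < X i ω} := h
      simp only [hZf, if_neg h, mul_zero, Real.exp_zero, Set.indicator_of_notMem h']
      ring
  have hZint : ∀ i, Integrable (fun ω => Real.exp (t * Zf i ω)) P := by
    intro i
    rw [hrw i]
    exact ((integrable_const _).indicator (hAmeas i)).add (integrable_const 1)
  have hexp1 : (1:ℝ) ≤ Real.exp t := Real.one_le_exp ht0
  have hmgf : ∀ i, mgf (Zf i) P t ≤ Real.exp (μb * (Real.exp t - 1)) := by
    intro i
    have hμi : (P {ω | q < X i ω}).toReal ≤ μb :=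
      ENNReal.toReal_le_of_le_ofReal hμb0 (hPA i)
    have hmgf_eq : mgf (Zf i) P t =
        (Real.exp t - 1) * (P {ω | q < X i ω}).toReal + 1 := by
      rw [mgf, hrw i, integral_add ((integrable_const _).indicator (hAmeas i))
        (integrable_const 1), integral_indicator_const _ (hAmeas i), integral_const,
        probReal_univ]
      simp [smul_eq_mul, measureReal_def]
      ring
    rw [hmgf_eq]
    have h2 : (Real.exp t - 1) * (P {ω | q < X i ω}).toReal ≤ (Real.exp t - 1) * μb :=
      mul_le_mul_of_nonneg_left hμi (by linarith)
    calc (Real.exp t - 1) * (P {ω | q < X i ω}).toReal + 1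
        ≤ (Real.exp t - 1) * μb + 1 := by linarith
      _ = μb * (Real.exp t - 1) + 1 := by ring
      _ ≤ Real.exp (μb * (Real.exp t - 1)) := Real.add_one_le_exp _
  have hmgfS : mgf Ssum P t = ∏ i, mgf (Zf i) P t := by
    rw [hSsum]
    exact hZindep.mgf_sum hZmeas Finset.univ
  have hint : Integrable (fun ω => Real.exp (t * Ssum ω)) P := by
    rw [hSsum]
    exact hZindep.integrable_exp_mul_sum hZmeas (fun i _ => hZint i)
  have hch := measure_ge_le_exp_mul_mgf (μ := P) (X := Ssum) aR ht0 hint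
  have hprod : ∏ i, mgf (Zf i) P t ≤ Real.exp ((n:ℝ) * (μb * (Real.exp t - 1))) := by
    calc ∏ i, mgf (Zf i) P t
        ≤ ∏ _i : Fin n, Real.exp (μb*(Real.exp t - 1)) :=
          Finset.prod_le_prod (fun i _ => mgf_nonneg) (fun i _ => hmgf i)
      _ = Real.exp ((n:ℝ)*(μb*(Real.exp t - 1))) := by
          rw [Finset.prod_const, Finset.card_univ, Fintype.card_fin, ← Real.exp_nat_mul]
  have hfinal : (P {ω | aR ≤ Ssum ω}).toReal ≤
      Real.exp ((n:ℝ)*μb*(Real.exp t - 1) - t*aR) := by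
    calc (P {ω | aR ≤ Ssum ω}).toReal
        ≤ Real.exp (-t*aR) * mgf Ssum P t := hch
      _ ≤ Real.exp (-t*aR) * Real.exp ((n:ℝ)*(μb*(Real.exp t - 1))) := by
          rw [hmgfS]
          exact mul_le_mul_of_nonneg_left hprod (Real.exp_nonneg _)
      _ = Real.exp ((n:ℝ)*μb*(Real.exp t - 1) - t*aR) := by
          rw [← Real.exp_add]
          ring_nf
  calc P {ω | Y m ω > q} ≤ P {ω | aR ≤ Ssum ω} := measure_mono hincl
    _ = ENNReal.ofReal ((P {ω | aR ≤ Ssum ω}).toReal) :=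
        (ENNReal.ofReal_toReal (measure_ne_top _ _)).symm
    _ ≤ ENNReal.ofReal (Real.exp ((n:ℝ)*μb*(Real.exp t - 1) - t*aR)) :=
        ENNReal.ofReal_le_ofReal hfinal
    _ ≤ ENNReal.ofReal (Real.exp (-(γ ^ 2 * piLow ^ 2 * n / (8 * (1 - p))))) := by
        apply ENNReal.ofReal_le_ofReal
        apply Real.exp_le_exp.mpr
        calc (n:ℝ)*μb*(Real.exp t - 1) - t*aR
            = (n:ℝ)*((1-p) - piLow*γ)*(Real.exp t - 1) - t*((n:ℝ) - m + 1) := by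
              rw [hμbdef, haR]
          _ ≤ -((n:ℝ)*(piLow*γ)^2/(8*(1-p))) := hexp
          _ = -(γ ^ 2 * piLow ^ 2 * n / (8 * (1 - p))) := by ring
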